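/- In the infinite hexagonal grid, the number of vertices at graph distance at most r from a fixed vertex v, excluding v itself, equals 3·(r+1 choose 2) = 3r(r+1)/2. -/

import Mathlib

/-- The hexagonal grid (honeycomb lattice), in "brick wall" coordinates on `ℤ²`:
every vertex `(x,y)` is adjacent to `(x±1,y)`, and there is a vertical edge
between `(x,y)` and `(x,y+1)` exactly when `x + y` is even. This is the infinite
3-regular plane graph dual to the triangular tessellation. -/
def hexGraph : SimpleGraph (ℤ × ℤ) where
  Adj u v := (u.2 = v.2 ∧ (u.1 - v.1 = 1 ∨ u.1 - v.1 = -1)) ∨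
    (u.1 = v.1 ∧ ((u.2 - v.2 = 1 ∧ (v.1 + v.2) % 2 = 0) ∨ (v.2 - u.2 = 1 ∧ (u.1 + u.2) % 2 = 0)))
  symm := ⟨by intro u v h; omega⟩
  loopless := ⟨by intro v h; omega⟩


lemma hex_adj (a b : ℤ × ℤ) : hexGraph.Adj a b ↔
    ((a.2 = b.2 ∧ (a.1 - b.1 = 1 ∨ a.1 - b.1 = -1)) ∨
    (a.1 = b.1 ∧ ((a.2 - b.2 = 1 ∧ (b.1 + b.2) % 2 = 0) ∨ (b.2 - a.2 = 1 ∧ (a.1 + a.2) % 2 = 0)))) :=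
  Iff.rfl

/-- distance-from-origin formula, ℤ-valued -/
def Dz (x y : ℤ) : ℤ :=
  (max ((x.natAbs : ℤ) + (y.natAbs : ℤ)) (if 0 ≤ y then 2*y - 1 else -2*y)) +
    ((max ((x.natAbs : ℤ) + (y.natAbs : ℤ)) (if 0 ≤ y then 2*y - 1 else -2*y)) + x + y) % 2

def D (p : ℤ × ℤ) : ℕ := (Dz p.1 p.2).toNat

lemma Dz_ge (x y : ℤ) : (x.natAbs : ℤ) + (y.natAbs : ℤ) ≤ Dz x y := by
  unfold Dz; split_ifs <;> omega

lemma Dz_nonneg (x y : ℤ) : 0 ≤ Dz x y := by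
  have := Dz_ge x y; omega

lemma D_cast (p : ℤ × ℤ) : (D p : ℤ) = Dz p.1 p.2 := by
  have := Dz_nonneg p.1 p.2; unfold D; omega

lemma D_zero : D (0, 0) = 0 := by
  unfold D Dz; norm_num

lemma D_eq_zero {p : ℤ × ℤ} (h : D p = 0) : p = (0, 0) := by
  have h1 := D_cast p
  have h2 := Dz_ge p.1 p.2
  have : p.1 = 0 ∧ p.2 = 0 := by omega
  exact Prod.ext this.1 this.2

lemma lip {a b : ℤ × ℤ} (h : hexGraph.Adj a b) : D b ≤ D a + 1 := by
  rw [hex_adj] at h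
  obtain ⟨x, y⟩ := a
  obtain ⟨z, w⟩ := b
  simp only at h
  have h1 := D_cast (x, y)
  have h2 := D_cast (z, w)
  simp only at h1 h2
  have : Dz z w ≤ Dz x y + 1 := by
    unfold Dz; split_ifs <;> omega
  omega

lemma descent {p : ℤ × ℤ} (hp : p ≠ (0, 0)) : ∃ q, hexGraph.Adj q p ∧ D q + 1 = D p := by
  obtain ⟨x, y⟩ := p
  have hp' : ¬(x = 0 ∧ y = 0) := by
    intro ⟨h1, h2⟩; exact hp (by simp [h1, h2])
  have key : ∀ q : ℤ × ℤ, Dz q.1 q.2 + 1 = Dz x y → D q + 1 = D (x, y) := by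
    intro q h
    have h1 := D_cast q
    have h2 := D_cast (x, y)
    have := Dz_nonneg q.1 q.2
    simp only at h1 h2
    omega
  rcases lt_trichotomy y 0 with hy | hy | hy
  · -- y < 0
    rcases Int.emod_two_eq (x + y) with hpar | hpar
    · -- go up
      refine ⟨(x, y + 1), ?_, key _ ?_⟩
      · rw [hex_adj]; right; exact ⟨rfl, Or.inl ⟨by omega, by omega⟩⟩
      · unfold Dz; split_ifs <;> omega
    · rcases lt_trichotomy x 0 with hx | hx | hx
      · refine ⟨(x + 1, y), ?_, key _ ?_⟩
        · rw [hex_adj]; left; exact ⟨rfl, by omega⟩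
        · unfold Dz; split_ifs <;> omega
      · refine ⟨(1, y), ?_, key _ ?_⟩
        · rw [hex_adj]; left; exact ⟨rfl, by omega⟩
        · unfold Dz; split_ifs <;> omega
      · refine ⟨(x - 1, y), ?_, key _ ?_⟩
        · rw [hex_adj]; left; exact ⟨rfl, by omega⟩
        · unfold Dz; split_ifs <;> omega
  · -- y = 0, x ≠ 0
    subst hy
    rcases lt_trichotomy x 0 with hx | hx | hx
    · refine ⟨(x + 1, 0), ?_, key _ ?_⟩
      · rw [hex_adj]; left; exact ⟨rfl, by omega⟩
      · unfold Dz; split_ifs <;> omega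
    · exact absurd ⟨hx, rfl⟩ hp'
    · refine ⟨(x - 1, 0), ?_, key _ ?_⟩
      · rw [hex_adj]; left; exact ⟨rfl, by omega⟩
      · unfold Dz; split_ifs <;> omega
  · -- y > 0
    rcases Int.emod_two_eq (x + y) with hpar | hpar
    · rcases lt_trichotomy x 0 with hx | hx | hx
      · refine ⟨(x + 1, y), ?_, key _ ?_⟩
        · rw [hex_adj]; left; exact ⟨rfl, by omega⟩
        · unfold Dz; split_ifs <;> omega
      · refine ⟨(1, y), ?_, key _ ?_⟩
        · rw [hex_adj]; left; exact ⟨rfl, by omega⟩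
        · unfold Dz; split_ifs <;> omega
      · refine ⟨(x - 1, y), ?_, key _ ?_⟩
        · rw [hex_adj]; left; exact ⟨rfl, by omega⟩
        · unfold Dz; split_ifs <;> omega
    · -- go down
      refine ⟨(x, y - 1), ?_, key _ ?_⟩
      · rw [hex_adj]; right; exact ⟨rfl, Or.inr ⟨by omega, by omega⟩⟩
      · unfold Dz; split_ifs <;> omega

lemma exists_walk_D (p : ℤ × ℤ) : ∃ w : hexGraph.Walk (0, 0) p, w.length = D p := by
  suffices H : ∀ n (p : ℤ × ℤ), D p = n → ∃ w : hexGraph.Walk (0, 0) p, w.length = D p from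
    H (D p) p rfl
  intro n
  induction n using Nat.strong_induction_on with
  | _ n ih =>
    intro p hp
    by_cases h0 : p = (0, 0)
    · subst h0
      exact ⟨SimpleGraph.Walk.nil, by rw [SimpleGraph.Walk.length_nil, D_zero]⟩
    · obtain ⟨q, hadj, hD⟩ := descent h0
      have hlt : D q < n := by omega
      obtain ⟨w, hw⟩ := ih (D q) hlt q rfl
      exact ⟨w.concat hadj, by rw [SimpleGraph.Walk.length_concat]; omega⟩

lemma walk_lower {u p : ℤ × ℤ} (w : hexGraph.Walk u p) : D p ≤ D u + w.length := by
  induction w with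
  | nil => simp
  | cons h w ih =>
    have := lip h
    rw [SimpleGraph.Walk.length_cons]
    omega

lemma dist_origin (p : ℤ × ℤ) : hexGraph.dist (0, 0) p = D p := by
  obtain ⟨w, hw⟩ := exists_walk_D p
  refine le_antisymm (hw ▸ SimpleGraph.dist_le w) ?_
  obtain ⟨w', hw'⟩ := SimpleGraph.Reachable.exists_walk_length_eq_dist ⟨w⟩
  have := walk_lower w'
  rw [D_zero] at this
  omega

def tau (v q : ℤ × ℤ) : ℤ × ℤ :=
  if (v.1 + v.2) % 2 = 0 then (q.1 + v.1, q.2 + v.2) else (q.1 + v.1, v.2 - q.2)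

def sig (v p : ℤ × ℤ) : ℤ × ℤ :=
  if (v.1 + v.2) % 2 = 0 then (p.1 - v.1, p.2 - v.2) else (p.1 - v.1, v.2 - p.2)

lemma sig_tau (v q : ℤ × ℤ) : sig v (tau v q) = q := by
  unfold sig tau; split_ifs <;> simp

lemma tau_sig (v p : ℤ × ℤ) : tau v (sig v p) = p := by
  unfold sig tau; split_ifs <;> simp

lemma sig_self (v : ℤ × ℤ) : sig v v = (0, 0) := by
  unfold sig; split_ifs <;> simp

lemma adj_sig (v a b : ℤ × ℤ) : hexGraph.Adj (sig v a) (sig v b) ↔ hexGraph.Adj a b := by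
  simp only [hex_adj, sig]; split_ifs <;> dsimp only <;> omega

lemma adj_tau (v a b : ℤ × ℤ) : hexGraph.Adj (tau v a) (tau v b) ↔ hexGraph.Adj a b := by
  rw [← adj_sig v, sig_tau, sig_tau]

def sigHom (v : ℤ × ℤ) : hexGraph →g hexGraph :=
  ⟨sig v, fun h => (adj_sig v _ _).mpr h⟩

def tauHom (v : ℤ × ℤ) : hexGraph →g hexGraph :=
  ⟨tau v, fun h => (adj_tau v _ _).mpr h⟩

lemma hex_reach (a b : ℤ × ℤ) : hexGraph.Reachable a b := by
  obtain ⟨wa, _⟩ := exists_walk_D a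
  obtain ⟨wb, _⟩ := exists_walk_D b
  exact (SimpleGraph.Walk.reachable wa).symm.trans (SimpleGraph.Walk.reachable wb)

lemma dist_formula (v p : ℤ × ℤ) : hexGraph.dist v p = D (sig v p) := by
  rw [← dist_origin]
  apply le_antisymm
  · obtain ⟨w, hw⟩ := (hex_reach ((0,0) : ℤ × ℤ) (sig v p)).exists_walk_length_eq_dist
    have htau0 : tau v (0, 0) = v := by unfold tau; split_ifs <;> simp
    calc hexGraph.dist v p ≤ ((w.map (tauHom v)).copy htau0 (tau_sig v p)).length :=
          SimpleGraph.dist_le _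
    _ = hexGraph.dist (0,0) (sig v p) := by
        exact (SimpleGraph.Walk.length_copy _ _ _).trans ((SimpleGraph.Walk.length_map _ _).trans hw)
  · obtain ⟨w, hw⟩ := (hex_reach v p).exists_walk_length_eq_dist
    calc hexGraph.dist (0,0) (sig v p) ≤ ((w.map (sigHom v)).copy (sig_self v) rfl).length :=
          SimpleGraph.dist_le _
    _ = hexGraph.dist v p := by
        exact (SimpleGraph.Walk.length_copy _ _ _).trans ((SimpleGraph.Walk.length_map _ _).trans hw)

lemma Dle_iff (x y : ℤ) (r : ℕ) : Dz x y ≤ r ↔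
    ((x.natAbs : ℤ) + (y.natAbs : ℤ) ≤ r ∧ 2*y ≤ r + (x+y) % 2 ∧ -2*y ≤ r - (x+y) % 2) := by
  unfold Dz; split_ifs <;> omega

noncomputable def ballF (r : ℕ) : Finset (ℤ × ℤ) :=
  ((Finset.Icc (-(r:ℤ)) r) ×ˢ (Finset.Icc (-(r:ℤ)) r)).filter (fun p => D p ≤ r)

lemma mem_ballF {r : ℕ} {p : ℤ × ℤ} : p ∈ ballF r ↔ D p ≤ r := by
  simp only [ballF, Finset.mem_filter, Finset.mem_product, Finset.mem_Icc]
  refine ⟨fun h => h.2, fun h => ⟨?_, h⟩⟩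
  have h1 := D_cast p
  have h2 := Dz_ge p.1 p.2
  omega

lemma sum0 : ∀ k : ℕ, (∑ s ∈ Finset.Icc (-(k:ℤ)) (k:ℤ), (2*k + 1 - s.natAbs)) = 3*k^2 + 3*k + 1
  | 0 => by simp
  | (k+1) => by
    have hins : Finset.Icc (-((k:ℤ)+1)) ((k:ℤ)+1) =
        insert (-((k:ℤ)+1)) (insert ((k:ℤ)+1) (Finset.Icc (-(k:ℤ)) (k:ℤ))) := by
      ext s; simp only [Finset.mem_insert, Finset.mem_Icc]; omega
    have hc : (Finset.Icc (-(k:ℤ)) (k:ℤ)).card = 2*k+1 := by rw [Int.card_Icc]; omega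
    push_cast
    rw [hins, Finset.sum_insert (by simp only [Finset.mem_insert, Finset.mem_Icc]; omega),
      Finset.sum_insert (by simp only [Finset.mem_Icc]; omega),
      Finset.sum_congr rfl (fun s hs => show 2*(k+1) + 1 - s.natAbs = (2*k + 1 - s.natAbs) + 2 by
        simp only [Finset.mem_Icc] at hs; omega),
      Finset.sum_add_distrib, Finset.sum_const, sum0 k, hc]
    have e1 : ((-((k:ℤ)+1)).natAbs) = k+1 := by omega
    have e2 : (((k:ℤ)+1).natAbs) = k+1 := by omega
    rw [e1, e2]
    have e3 : 2*(k+1) + 1 - (k+1) = k + 2 := by omega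
    rw [e3]; ring

lemma sum1 : ∀ m : ℕ, (∑ s ∈ Finset.Icc (-(m:ℤ)-1) (m:ℤ), (2*m + 2 - s.natAbs)) = 3*(m+1)^2
  | 0 => by decide
  | (m+1) => by
    have hins : Finset.Icc (-((m:ℤ)+1)-1) ((m:ℤ)+1) =
        insert (-((m:ℤ)+1)-1) (insert ((m:ℤ)+1) (Finset.Icc (-(m:ℤ)-1) (m:ℤ))) := by
      ext s; simp only [Finset.mem_insert, Finset.mem_Icc]; omega
    have hc : (Finset.Icc (-(m:ℤ)-1) (m:ℤ)).card = 2*m+2 := by rw [Int.card_Icc]; omega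
    push_cast
    rw [hins, Finset.sum_insert (by simp only [Finset.mem_insert, Finset.mem_Icc]; omega),
      Finset.sum_insert (by simp only [Finset.mem_Icc]; omega),
      Finset.sum_congr rfl (fun s hs => show 2*(m+1) + 2 - s.natAbs = (2*m + 2 - s.natAbs) + 2 by
        simp only [Finset.mem_Icc] at hs; omega),
      Finset.sum_add_distrib, Finset.sum_const, sum1 m, hc]
    have e1 : ((-((m:ℤ)+1)-1).natAbs) = m+2 := by omega
    have e2 : (((m:ℤ)+1).natAbs) = m+1 := by omega
    rw [e1, e2]
    have e3 : 2*(m+1) + 2 - (m+2) = m + 2 := by omega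
    have e4 : 2*(m+1) + 2 - (m+1) = m + 3 := by omega
    rw [e3, e4]; ring

noncomputable def hex0 (k : ℕ) : Finset (ℤ × ℤ) :=
  ((Finset.Icc (-(k:ℤ)) (k:ℤ)) ×ˢ (Finset.Icc (-(k:ℤ)) (k:ℤ))).filter
    (fun q => q.1 - q.2 ≤ k ∧ q.2 - q.1 ≤ k)

noncomputable def hex1 (m : ℕ) : Finset (ℤ × ℤ) :=
  ((Finset.Icc (-(m:ℤ)-1) (m:ℤ)) ×ˢ (Finset.Icc (-(m:ℤ)-1) (m:ℤ))).filter
    (fun q => q.1 - q.2 ≤ (m:ℤ)+1 ∧ q.2 - q.1 ≤ m)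

lemma card_hex0 (k : ℕ) : (hex0 k).card = 3*k^2 + 3*k + 1 := by
  rw [Finset.card_eq_sum_card_fiberwise (f := Prod.fst) (t := Finset.Icc (-(k:ℤ)) (k:ℤ))
    (fun p hp => by
      exact (Finset.mem_product.mp (Finset.mem_filter.mp hp).1).1)]
  rw [← sum0 k]
  apply Finset.sum_congr rfl
  intro s hs
  simp only [Finset.mem_Icc] at hs
  have himg : (hex0 k).filter (fun q => q.1 = s) =
      (Finset.Icc (max (-(k:ℤ)) (s-k)) (min (k:ℤ) (s+k))).image (fun t => (s, t)) := by
    ext ⟨a, b⟩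
    simp only [hex0, Finset.mem_filter, Finset.mem_product, Finset.mem_Icc, Finset.mem_image,
      Prod.mk.injEq]
    constructor
    · rintro ⟨⟨⟨h1, h2⟩, h3, h4⟩, h5⟩
      exact ⟨b, by omega, by omega, rfl⟩
    · rintro ⟨t, ht, rfl, rfl⟩
      simp only [Finset.mem_Icc, max_le_iff, le_min_iff, and_true] at ht ⊢
      omega
  rw [himg, Finset.card_image_of_injective _ (fun a b h => by simpa using h), Int.card_Icc]
  omega

lemma card_hex1 (m : ℕ) : (hex1 m).card = 3*(m+1)^2 := by
  rw [Finset.card_eq_sum_card_fiberwise (f := Prod.fst) (t := Finset.Icc (-(m:ℤ)-1) (m:ℤ))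
    (fun p hp => by
      exact (Finset.mem_product.mp (Finset.mem_filter.mp hp).1).1)]
  rw [← sum1 m]
  apply Finset.sum_congr rfl
  intro s hs
  simp only [Finset.mem_Icc] at hs
  have himg : (hex1 m).filter (fun q => q.1 = s) =
      (Finset.Icc (max (-(m:ℤ)-1) (s-m-1)) (min (m:ℤ) (s+m))).image (fun t => (s, t)) := by
    ext ⟨a, b⟩
    simp only [hex1, Finset.mem_filter, Finset.mem_product, Finset.mem_Icc, Finset.mem_image,
      Prod.mk.injEq]
    constructor
    · rintro ⟨⟨⟨h1, h2⟩, h3, h4⟩, h5⟩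
      exact ⟨b, by omega, by omega, rfl⟩
    · rintro ⟨t, ht, rfl, rfl⟩
      simp only [Finset.mem_Icc, max_le_iff, le_min_iff, and_true] at ht ⊢
      omega
  rw [himg, Finset.card_image_of_injective _ (fun a b h => by simpa using h), Int.card_Icc]
  omega

lemma D_le_iff {r : ℕ} {p : ℤ × ℤ} : D p ≤ r ↔ Dz p.1 p.2 ≤ (r:ℤ) := by
  have := D_cast p; omega

lemma even_part (r : ℕ) :
    (ballF r).filter (fun p => (p.1 + p.2) % 2 = 0) =
      (hex0 (r/2)).image (fun q => (q.1 + q.2, q.1 - q.2)) := by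
  ext p
  simp only [Finset.mem_filter, Finset.mem_image, mem_ballF, hex0, Finset.mem_product,
    Finset.mem_Icc, Prod.ext_iff]
  constructor
  · rintro ⟨hD, hpar⟩
    have hz : Dz p.1 p.2 ≤ (r:ℤ) := D_le_iff.mp hD
    rw [Dle_iff] at hz
    refine ⟨((p.1 + p.2)/2, (p.1 - p.2)/2), ⟨⟨⟨?_, ?_⟩, ?_, ?_⟩, ?_, ?_⟩, ?_, ?_⟩ <;>
      dsimp only <;> omega
  · rintro ⟨⟨s, t⟩, hmem, heq⟩
    dsimp only at hmem heq
    refine ⟨?_, by omega⟩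
    rw [D_le_iff, Dle_iff]
    omega

lemma odd_part (r : ℕ) (hr : 1 ≤ r) :
    (ballF r).filter (fun p => ¬((p.1 + p.2) % 2 = 0)) =
      (hex1 ((r-1)/2)).image (fun q => (q.1 + q.2 + 1, q.1 - q.2)) := by
  ext p
  simp only [Finset.mem_filter, Finset.mem_image, mem_ballF, hex1, Finset.mem_product,
    Finset.mem_Icc, Prod.ext_iff]
  constructor
  · rintro ⟨hD, hpar⟩
    have hz : Dz p.1 p.2 ≤ (r:ℤ) := D_le_iff.mp hD
    rw [Dle_iff] at hz
    refine ⟨((p.1 + p.2 - 1)/2, (p.1 - p.2 - 1)/2), ⟨⟨⟨?_, ?_⟩, ?_, ?_⟩, ?_, ?_⟩, ?_, ?_⟩ <;>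
      dsimp only <;> omega
  · rintro ⟨⟨s, t⟩, hmem, heq⟩
    dsimp only at hmem heq
    refine ⟨?_, by omega⟩
    rw [D_le_iff, Dle_iff]
    omega

lemma inj0 : Function.Injective (fun q : ℤ × ℤ => (q.1 + q.2, q.1 - q.2)) := by
  intro a b h
  rw [Prod.ext_iff] at h ⊢
  dsimp only at h
  omega

lemma inj1 : Function.Injective (fun q : ℤ × ℤ => (q.1 + q.2 + 1, q.1 - q.2)) := by
  intro a b h
  rw [Prod.ext_iff] at h ⊢
  dsimp only at h
  omega

lemma card_ballF (r : ℕ) : (ballF r).card = 3*(r/2)^2 + 3*(r/2) + 1 + 3*((r+1)/2)^2 := by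
  rcases Nat.eq_zero_or_pos r with rfl | hr
  · have hb : ballF 0 = {((0,0) : ℤ × ℤ)} := by
      ext p
      simp only [mem_ballF, Finset.mem_singleton]
      constructor
      · intro h; exact D_eq_zero (Nat.le_zero.mp h)
      · rintro rfl; rw [D_zero]
    rw [hb]; rfl
  · have hsplit := Finset.card_filter_add_card_filter_not
      (s := ballF r) (p := fun p : ℤ × ℤ => (p.1 + p.2) % 2 = 0)
    rw [even_part r, Finset.card_image_of_injective _ inj0, card_hex0,
      odd_part r hr, Finset.card_image_of_injective _ inj1, card_hex1] at hsplit
    have hb : (r-1)/2 + 1 = (r+1)/2 := by omega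
    rw [hb] at hsplit
    rw [← hsplit]

/-- In the infinite hexagonal grid, the number of vertices at graph distance at most
`r` from a fixed vertex `v`, excluding `v` itself, equals `3·(r+1 choose 2) = 3r(r+1)/2`. -/
theorem hex_grid_ball_card (v : ℤ × ℤ) (r : ℕ) :
    ({p : ℤ × ℤ | p ≠ v ∧ hexGraph.dist v p ≤ r}).ncard = 3 * (r + 1).choose 2 ∧
      3 * (r + 1).choose 2 = 3 * r * (r + 1) / 2 := by
  have hch : (r+1).choose 2 = (r+1)*r/2 := by rw [Nat.choose_two_right]; simp
  constructor
  · have htau0 : tau v (0,0) = v := by unfold tau; split_ifs <;> simp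
    have hinj : Function.Injective (tau v) := Function.LeftInverse.injective (sig_tau v)
    have hset : {p : ℤ × ℤ | p ≠ v ∧ hexGraph.dist v p ≤ r} =
        tau v '' {q : ℤ × ℤ | q ≠ (0,0) ∧ D q ≤ r} := by
      ext p
      simp only [Set.mem_setOf_eq, Set.mem_image]
      constructor
      · rintro ⟨hne, hd⟩
        refine ⟨sig v p, ⟨fun h0 => hne ?_, ?_⟩, tau_sig v p⟩
        · have := congrArg (tau v) h0
          rwa [tau_sig, htau0] at this
        · rwa [dist_formula] at hd
      · rintro ⟨q, ⟨hq0, hqD⟩, rfl⟩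
        refine ⟨fun h => hq0 ?_, ?_⟩
        · have := congrArg (sig v) h
          rwa [sig_tau, sig_self] at this
        · rw [dist_formula, sig_tau]; exact hqD
    have hset2 : {q : ℤ × ℤ | q ≠ (0,0) ∧ D q ≤ r} = ↑((ballF r).erase ((0,0) : ℤ × ℤ)) := by
      ext q
      simp only [Set.mem_setOf_eq, Finset.coe_erase, Set.mem_diff, Finset.mem_coe, mem_ballF,
        Set.mem_singleton_iff]
      tauto
    rw [hset, Set.ncard_image_of_injective _ hinj, hset2, Set.ncard_coe_finset,
      Finset.card_erase_of_mem (mem_ballF.mpr (by rw [D_zero]; exact Nat.zero_le r)),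
      card_ballF, hch]
    apply Nat.sub_eq_of_eq_add
    rcases Nat.even_or_odd r with ⟨k, hk⟩ | ⟨k, hk⟩
    · subst hk
      have e1 : (k+k)/2 = k := by omega
      have e2 : (k+k+1)/2 = k := by omega
      have e3 : (k+k+1)*(k+k)/2 = k*(2*k+1) :=
        Nat.div_eq_of_eq_mul_left (by norm_num) (by ring)
      rw [e1, e2, e3]; ring
    · subst hk
      have e1 : (2*k+1)/2 = k := by omega
      have e2 : (2*k+1+1)/2 = k+1 := by omega
      have e3 : (2*k+1+1)*(2*k+1)/2 = (k+1)*(2*k+1) :=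
        Nat.div_eq_of_eq_mul_left (by norm_num) (by ring)
      rw [e1, e2, e3]; ring
  · rw [hch]
    obtain ⟨c, hc⟩ : 2 ∣ (r+1)*r := by
      rcases Nat.even_or_odd r with ⟨k, hk⟩ | ⟨k, hk⟩ <;> subst hk <;>
        [exact ⟨(k+k+1)*k, by ring⟩; exact ⟨(k+1)*(2*k+1), by ring⟩]
    have h4 : 3*r*(r+1) = 2*(3*c) := by
      rw [mul_assoc, mul_comm r (r+1), hc]; ring
    rw [hc, h4]
    omega
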